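/- Let G be a finitely generated virtually nilpotent group and T a continuous action of G on a compact metric space X. If there exists g ∈ G such that T_g is expansive and has the pseudo-orbit tracing property, then T is topologically stable. -/

import Mathlib

/-- A continuous action of a group `G` on a topological space `X`. -/
def IsContAction {G X : Type*} [Group G] [TopologicalSpace X] (T : G → X → X) : Prop :=
  (∀ g, Continuous (T g)) ∧ (∀ x, T 1 x = x) ∧ ∀ g h x, T (g * h) x = T g (T h x)

/-- `{x_g}` is a `δ` pseudo-orbit of `T` with respect to the generating set `A`. -/
def IsPseudoOrbit {G X : Type*} [Group G] [MetricSpace X] (T : G → X → X) (A : Set G)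
    (δ : ℝ) (x : G → X) : Prop :=
  ∀ a ∈ A, ∀ g : G, dist (T a (x g)) (x (a * g)) < δ

/-- The point `y` `ε`-traces the pseudo-orbit `{x_g}`. -/
def Traces {G X : Type*} [Group G] [MetricSpace X] (T : G → X → X) (ε : ℝ)
    (x : G → X) (y : X) : Prop :=
  ∀ g : G, dist (T g y) (x g) < ε

/-- `T` has the pseudo-orbit tracing property with respect to the generating set `A`. -/
def POTPWrt {G X : Type*} [Group G] [MetricSpace X] (T : G → X → X) (A : Set G) : Prop :=
  ∀ ε > (0 : ℝ), ∃ δ > (0 : ℝ), ∀ x : G → X, IsPseudoOrbit T A δ x → ∃ y : X, Traces T ε x y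

/-- `T` is `A`-topologically stable. -/
def TopStableWrt {G X : Type*} [Group G] [MetricSpace X] (T : G → X → X) (A : Set G) : Prop :=
  ∀ ε > (0 : ℝ), ∃ δ > (0 : ℝ), ∀ S : G → X → X, IsContAction S →
    (∀ a ∈ A, ∀ x : X, dist (T a x) (S a x) < δ) →
    ∃ f : X → X, Continuous f ∧ (∀ g x, T g (f x) = f (S g x)) ∧ ∀ x, dist (f x) x ≤ ε

/-- `T` is expansive with expansive constant `c`. -/
def ExpansiveWith {G X : Type*} [Group G] [MetricSpace X] (T : G → X → X) (c : ℝ) : Prop :=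
  0 < c ∧ ∀ x y : X, x ≠ y → ∃ g : G, dist (T g x) (T g y) > c

/-- The homeomorphism `T_g` is expansive (as a `ℤ`-action) with expansive constant `c`. -/
def ZExpansiveWith {G X : Type*} [Group G] [MetricSpace X] (T : G → X → X) (g : G)
    (c : ℝ) : Prop :=
  0 < c ∧ ∀ x y : X, x ≠ y → ∃ n : ℤ, dist (T (g ^ n) x) (T (g ^ n) y) > c

/-- The homeomorphism `T_g` has the classical pseudo-orbit tracing property (as a
`ℤ`-action). -/
def ZPOTP {G X : Type*} [Group G] [MetricSpace X] (T : G → X → X) (g : G) : Prop :=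
  ∀ ε > (0 : ℝ), ∃ δ > (0 : ℝ), ∀ x : ℤ → X, (∀ n : ℤ, dist (T g (x n)) (x (n + 1)) < δ) →
    ∃ y : X, ∀ n : ℤ, dist (T (g ^ n) y) (x n) < ε


set_option linter.unusedSectionVars false

section AuxTS
variable {G X : Type*} [Group G] [MetricSpace X] [CompactSpace X]


variable {G X : Type*} [Group G] [MetricSpace X] [CompactSpace X]

lemma listUnifCont (T : G → X → X) (hTc : ∀ g : G, Continuous (T g)) (L : List G)
    {ρ : ℝ} (hρ : 0 < ρ) :
    ∃ μ > (0 : ℝ), ∀ h ∈ L, ∀ u v : X, dist u v < μ → dist (T h u) (T h v) < ρ := by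
  induction L with
  | nil => exact ⟨1, one_pos, by simp⟩
  | cons a L ih =>
    obtain ⟨μ, hμ, hL⟩ := ih
    obtain ⟨μa, hμa, ha⟩ := Metric.uniformContinuous_iff.mp
      (CompactSpace.uniformContinuous_of_continuous (hTc a)) ρ hρ
    refine ⟨min μa μ, lt_min hμa hμ, ?_⟩
    intro h hh u v huv
    rcases List.mem_cons.mp hh with rfl | hh
    · exact ha (huv.trans_le (min_le_left _ _))
    · exact hL h hh u v (huv.trans_le (min_le_right _ _))

/-- Expansiveness passes to positive powers (with a smaller constant). -/
lemma zexpansive_pow (T : G → X → X) (hT : IsContAction T) {g : G} {c : ℝ}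
    (hexp : ZExpansiveWith T g c) {m : ℕ} (hm : 0 < m) :
    ∃ c' > (0 : ℝ), ZExpansiveWith T (g ^ m) c' := by
  obtain ⟨μ, hμ, hμc⟩ := listUnifCont T hT.1 ((List.range m).map (g ^ ·)) hexp.1
  refine ⟨μ / 2, by linarith, by linarith, ?_⟩
  intro x y hxy
  by_contra hcon
  push_neg at hcon
  obtain ⟨n, hn⟩ := hexp.2 x y hxy
  set q := n / (m : ℤ) with hq
  set r := (n % (m : ℤ)).toNat with hr
  have hm' : (0 : ℤ) < (m : ℤ) := by exact_mod_cast hm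
  have hrn : (r : ℤ) = n % (m : ℤ) := Int.toNat_of_nonneg (Int.emod_nonneg n hm'.ne')
  have hrm : r < m := by
    have := Int.emod_lt_of_pos n hm'
    omega
  have hsplit : g ^ n = g ^ r * (g ^ m) ^ q := by
    rw [← zpow_natCast g r, ← zpow_natCast g m, ← zpow_mul, ← zpow_add]
    congr 1
    rw [hrn, hq]
    exact (Int.emod_add_mul_ediv n (m : ℤ)).symm
  have hmem : g ^ r ∈ (List.range m).map (g ^ ·) :=
    List.mem_map.mpr ⟨r, List.mem_range.mpr hrm, rfl⟩
  have hd : dist (T ((g ^ m) ^ q) x) (T ((g ^ m) ^ q) y) < μ := by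
    have := hcon q
    linarith
  have := hμc (g ^ r) hmem _ _ hd
  rw [← hT.2.2, ← hT.2.2, ← hsplit] at this
  linarith

/-- POTP passes to positive powers. -/
lemma zpotp_pow (T : G → X → X) (hT : IsContAction T) {g : G} (hpotp : ZPOTP T g)
    {m : ℕ} (hm : 0 < m) : ZPOTP T (g ^ m) := by
  intro ε hε
  obtain ⟨δ, hδ, htr⟩ := hpotp ε hε
  refine ⟨δ, hδ, ?_⟩
  intro y hy
  have hm' : (0 : ℤ) < (m : ℤ) := by exact_mod_cast hm
  set x : ℤ → X := fun n => T (g ^ (n % (m : ℤ)).toNat) (y (n / (m : ℤ))) with hx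
  have hpo : ∀ n : ℤ, dist (T g (x n)) (x (n + 1)) < δ := by
    intro n
    set q := n / (m : ℤ) with hq
    set r := (n % (m : ℤ)) with hr
    have hr0 : 0 ≤ r := Int.emod_nonneg n hm'.ne'
    have hrm : r < m := Int.emod_lt_of_pos n hm'
    have hT1 : T g (x n) = T (g ^ (r.toNat + 1)) (y q) := by
      rw [hx]
      simp only
      rw [← hT.2.2]
      congr 1
      rw [pow_succ']
    have hqr : r + (m : ℤ) * q = n := Int.emod_add_mul_ediv n (m : ℤ)
    rcases lt_or_eq_of_le (by omega : r + 1 ≤ (m : ℤ)) with hlt | heq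
    · -- within a block : distance zero
      have hdiv : (n + 1) / (m : ℤ) = q ∧ (n + 1) % (m : ℤ) = r + 1 :=
        (Int.ediv_emod_unique hm').mpr ⟨by linarith [hqr], by omega, hlt⟩
      have ht : ((n + 1) % (m : ℤ)).toNat = r.toNat + 1 := by
        rw [hdiv.2]; omega
      have hx1 : x (n + 1) = T (g ^ (r.toNat + 1)) (y q) := by
        rw [hx]; simp only; rw [hdiv.1, ht]
      rw [hT1, hx1, dist_self]
      exact hδ
    · -- block boundary
      have hdiv : (n + 1) / (m : ℤ) = q + 1 ∧ (n + 1) % (m : ℤ) = 0 :=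
        (Int.ediv_emod_unique hm').mpr ⟨by linear_combination hqr - heq, le_refl _, hm'⟩
      have hx1 : x (n + 1) = y (q + 1) := by
        rw [hx]; simp only; rw [hdiv.1, hdiv.2]
        simp [hT.2.1]
      have hrm' : r.toNat + 1 = m := by omega
      rw [hT1, hx1, hrm']
      exact hy q
  obtain ⟨z, hz⟩ := htr x hpo
  refine ⟨z, fun q => ?_⟩
  have hq := hz ((m : ℤ) * q)
  have h1 : ((m : ℤ) * q) % (m : ℤ) = 0 := Int.mul_emod_right _ _
  have h2 : ((m : ℤ) * q) / (m : ℤ) = q := Int.mul_ediv_cancel_left _ hm'.ne'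
  rw [hx] at hq
  simp only [h1, h2, Int.toNat_zero, pow_zero, hT.2.1] at hq
  rw [zpow_mul, zpow_natCast] at hq
  exact hq

end AuxTS

section AuxTS2
variable {G X : Type*} [Group G] [MetricSpace X] [CompactSpace X]


lemma closePropagate (A : Finset G) (hAgen : Subgroup.closure (A : Set G) = ⊤)
    (T : G → X → X) (hT : IsContAction T) (h : G) :
    ∀ η > (0 : ℝ), ∃ δ > (0 : ℝ), ∀ S : G → X → X, IsContAction S →
      (∀ a ∈ (A : Set G), ∀ x : X, dist (T a x) (S a x) < δ) →
      ∀ x : X, dist (T h x) (S h x) < η := by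
  have hmem : h ∈ Subgroup.closure (A : Set G) := hAgen ▸ Subgroup.mem_top h
  induction hmem using Subgroup.closure_induction with
  | mem a ha =>
    intro η hη
    exact ⟨η, hη, fun S _ hclose x => hclose a ha x⟩
  | one =>
    intro η hη
    refine ⟨η, hη, fun S hS _ x => ?_⟩
    rw [hT.2.1, hS.2.1]
    simpa using hη
  | mul a b _ _ pa pb =>
    intro η hη
    obtain ⟨μ, hμ, hμc⟩ := Metric.uniformContinuous_iff.mp
      (CompactSpace.uniformContinuous_of_continuous (hT.1 a)) (η / 2) (by linarith)
    obtain ⟨δ1, hδ1, h1⟩ := pa (η / 2) (by linarith)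
    obtain ⟨δ2, hδ2, h2⟩ := pb μ hμ
    refine ⟨min δ1 δ2, lt_min hδ1 hδ2, fun S hS hclose x => ?_⟩
    have hclose1 : ∀ a' ∈ (A : Set G), ∀ x : X, dist (T a' x) (S a' x) < δ1 :=
      fun a' ha' x => (hclose a' ha' x).trans_le (min_le_left _ _)
    have hclose2 : ∀ a' ∈ (A : Set G), ∀ x : X, dist (T a' x) (S a' x) < δ2 :=
      fun a' ha' x => (hclose a' ha' x).trans_le (min_le_right _ _)
    rw [hT.2.2, hS.2.2]
    calc dist (T a (T b x)) (S a (S b x))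
        ≤ dist (T a (T b x)) (T a (S b x)) + dist (T a (S b x)) (S a (S b x)) :=
          dist_triangle _ _ _
      _ < η / 2 + η / 2 := by
          gcongr
          · exact hμc (h2 S hS hclose2 x)
          · exact h1 S hS hclose1 (S b x)
      _ = η := by ring
  | inv a _ pa =>
    intro η hη
    obtain ⟨μ, hμ, hμc⟩ := Metric.uniformContinuous_iff.mp
      (CompactSpace.uniformContinuous_of_continuous (hT.1 a⁻¹)) η hη
    obtain ⟨δ1, hδ1, h1⟩ := pa μ hμ
    refine ⟨δ1, hδ1, fun S hS hclose x => ?_⟩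
    set y := S a⁻¹ x with hy
    have hTy : T a⁻¹ (T a y) = y := by
      rw [← hT.2.2, inv_mul_cancel, hT.2.1]
    have hSy : S a y = x := by
      rw [hy, ← hS.2.2, mul_inv_cancel, hS.2.1]
    have : dist (T a y) x < μ := by
      have := h1 S hS hclose y
      rwa [hSy] at this
    have hfin : dist (T a⁻¹ (T a y)) (T a⁻¹ x) < η := hμc this
    rw [hTy] at hfin
    rw [dist_comm]
    exact hfin

end AuxTS2

section AuxGrp


variable {G : Type*} [Group G]

/-- The iterated commutator chain `c_0 = a`, `c_{i+1} = g⁻¹ c_i⁻¹ g c_i`. -/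
def commChain (g a : G) : ℕ → G
  | 0 => a
  | i + 1 => g⁻¹ * (commChain g a i)⁻¹ * g * commChain g a i

lemma commChain_succ (g a : G) (i : ℕ) :
    commChain g a (i + 1) = g⁻¹ * (commChain g a i)⁻¹ * g * commChain g a i := rfl

lemma commChain_mem {N : Subgroup G} (hN : N.Normal) {g : G} (hg : g ∈ N) (a : G) :
    ∀ i : ℕ, commChain g a (i + 1) ∈ N := by
  intro i
  induction i with
  | zero =>
    have h0 : commChain g a 0 = a := rfl
    have h1 : commChain g a 1 = g⁻¹ * (a⁻¹ * g * a⁻¹⁻¹) := by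
      rw [commChain_succ, h0]; group
    rw [h1]
    exact mul_mem (inv_mem hg) (hN.conj_mem g hg a⁻¹)
  | succ i ih =>
    rw [commChain_succ]
    exact mul_mem (mul_mem (mul_mem (inv_mem hg) (inv_mem ih)) hg) ih

open scoped commutatorElement in
lemma commChain_lcs {N : Subgroup G} (hN : N.Normal) {g : G} (hg : g ∈ N) (a : G) :
    ∀ i : ℕ, ∃ h : commChain g a (i + 1) ∈ N,
      (⟨commChain g a (i + 1), h⟩ : N) ∈ Subgroup.lowerCentralSeries (⊤ : Subgroup N) i := by
  intro i
  induction i with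
  | zero => exact ⟨commChain_mem hN hg a 0, Subgroup.mem_top _⟩
  | succ i ih =>
    obtain ⟨hmem, hlcs⟩ := ih
    refine ⟨commChain_mem hN hg a (i + 1), ?_⟩
    set x : N := ⟨commChain g a (i + 1), hmem⟩ with hxdef
    set gN : N := ⟨g, hg⟩ with hgdef
    have key : (⟨commChain g a (i + 2), commChain_mem hN hg a (i + 1)⟩ : N)
        = (⁅x⁻¹, gN⁻¹⁆)⁻¹ := by
      apply Subtype.ext
      show commChain g a (i + 2) = _
      rw [commChain_succ]
      simp only [commutatorElement_def]
      rw [hxdef, hgdef]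
      push_cast
      group
    rw [key]
    have hsucc : Subgroup.lowerCentralSeries (⊤ : Subgroup N) (i + 1) = ⁅Subgroup.lowerCentralSeries (⊤ : Subgroup N) i, ⊤⁆ := by
      rw [Subgroup.lowerCentralSeries_succ]
    rw [hsucc]
    exact inv_mem (Subgroup.commutator_mem_commutator (inv_mem hlcs) (Subgroup.mem_top _))

lemma commChain_eq_one {N : Subgroup G} (hN : N.Normal) {g : G} (hg : g ∈ N) (a : G)
    {n : ℕ} (hn : Subgroup.lowerCentralSeries (⊤ : Subgroup N) n = ⊥) : commChain g a (n + 1) = 1 := by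
  obtain ⟨hmem, hlcs⟩ := commChain_lcs hN hg a n
  rw [hn, Subgroup.mem_bot] at hlcs
  exact congrArg Subtype.val hlcs

/-- In a group with a finite-index subgroup, every element has a positive power in it. -/
lemma exists_pow_mem_of_finiteIndex (N : Subgroup G) [N.Normal] [N.FiniteIndex] (g : G) :
    ∃ m : ℕ, 0 < m ∧ g ^ m ∈ N := by
  haveI : Finite (G ⧸ N) := N.finite_quotient_of_finiteIndex
  set q : G ⧸ N := QuotientGroup.mk g with hq
  refine ⟨orderOf q, orderOf_pos q, ?_⟩
  have : q ^ orderOf q = 1 := pow_orderOf_eq_one q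
  rw [hq, ← QuotientGroup.mk_pow, QuotientGroup.eq_one_iff] at this
  exact this

/-- The normal core of a nilpotent subgroup is nilpotent. -/
lemma normalCore_isNilpotent (H : Subgroup G) (hHnil : Group.IsNilpotent H) :
    Group.IsNilpotent H.normalCore := by
  haveI : Group.IsNilpotent H := hHnil
  exact nilpotent_of_mulEquiv (Subgroup.subgroupOfEquivOfLe H.normalCore_le)

end AuxGrp

/-- Closeness propagation over a finite list of group elements. -/
lemma closePropagateList {G X : Type*} [Group G] [MetricSpace X] [CompactSpace X]
    (A : Finset G) (hAgen : Subgroup.closure (A : Set G) = ⊤)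
    (T : G → X → X) (hT : IsContAction T) (L : List G) {η : ℝ} (hη : 0 < η) :
    ∃ δ > (0 : ℝ), ∀ S : G → X → X, IsContAction S →
      (∀ a ∈ (A : Set G), ∀ x : X, dist (T a x) (S a x) < δ) →
      ∀ h ∈ L, ∀ x : X, dist (T h x) (S h x) < η := by
  induction L with
  | nil => exact ⟨1, one_pos, by simp⟩
  | cons b L ih =>
    obtain ⟨δ, hδ, hL⟩ := ih
    obtain ⟨δb, hδb, hb⟩ := closePropagate A hAgen T hT b η hη
    refine ⟨min δb δ, lt_min hδb hδ, ?_⟩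
    intro S hS hclose h hh x
    have hcb : ∀ a ∈ (A : Set G), ∀ x : X, dist (T a x) (S a x) < δb :=
      fun a ha x => (hclose a ha x).trans_le (min_le_left _ _)
    have hcL : ∀ a ∈ (A : Set G), ∀ x : X, dist (T a x) (S a x) < δ :=
      fun a ha x => (hclose a ha x).trans_le (min_le_right _ _)
    rcases List.mem_cons.mp hh with rfl | hh
    · exact hb S hS hcb x
    · exact hL S hS hcL h hh x

theorem topStable_of_virtually_nilpotent_of_element_expansive_potp
    {G X : Type*} [Group G] [MetricSpace X] [CompactSpace X]
    (H : Subgroup G) (hHnil : Group.IsNilpotent H) (hHfin : H.FiniteIndex)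
    (A : Finset G) (hAgen : Subgroup.closure (A : Set G) = ⊤)
    (T : G → X → X) (hT : IsContAction T)
    (g : G) (c : ℝ) (hexp : ZExpansiveWith T g c) (hpotp : ZPOTP T g) :
    TopStableWrt T (A : Set G) := by
  classical
  set N := H.normalCore with hNdef
  have hNnormal : N.Normal := H.normalCore_normal
  haveI : H.FiniteIndex := hHfin
  haveI : N.Normal := hNnormal
  haveI : N.FiniteIndex := H.finiteIndex_normalCore
  obtain ⟨nN, hnN⟩ := nilpotent_iff_lowerCentralSeries.mp (normalCore_isNilpotent H hHnil)
  obtain ⟨m, hm, hgm⟩ := exists_pow_mem_of_finiteIndex N g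
  obtain ⟨c', hc', hexp'⟩ := zexpansive_pow T hT hexp hm
  have hpotp' : ZPOTP T (g ^ m) := zpotp_pow T hT hpotp hm
  set g' := g ^ m with hg'
  intro ε hε
  set D : List G :=
    A.toList.flatMap (fun a => (List.range (nN + 1)).map (commChain g' a)) with hD
  obtain ⟨μ, hμ, hμD⟩ := listUnifCont T hT.1 D (ρ := c' / 4) (by linarith)
  set ε1 := min ε (min (c' / 2) μ) with hε1def
  have hε1 : 0 < ε1 := lt_min hε (lt_min (by linarith) hμ)
  have hε1ε : ε1 ≤ ε := min_le_left _ _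
  have hε1c : ε1 ≤ c' / 2 := le_trans (min_le_right _ _) (min_le_left _ _)
  have hε1μ : ε1 ≤ μ := le_trans (min_le_right _ _) (min_le_right _ _)
  have hε1le : ε1 ≤ c' - ε1 := by linarith
  obtain ⟨δ1, hδ1, htrace⟩ := hpotp' ε1 hε1
  obtain ⟨δ2, hδ2, hprop2⟩ := closePropagate A hAgen T hT g' δ1 hδ1
  obtain ⟨δ3, hδ3, hprop3⟩ := closePropagateList A hAgen T hT D (η := c' / 4) (by linarith)
  refine ⟨min δ2 δ3, lt_min hδ2 hδ3, ?_⟩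
  intro S hS hclose
  have hclose2 : ∀ a ∈ (A : Set G), ∀ x : X, dist (T a x) (S a x) < δ2 :=
    fun a ha x => (hclose a ha x).trans_le (min_le_left _ _)
  have hclose3 : ∀ a ∈ (A : Set G), ∀ x : X, dist (T a x) (S a x) < δ3 :=
    fun a ha x => (hclose a ha x).trans_le (min_le_right _ _)
  have hcloseg : ∀ x : X, dist (T g' x) (S g' x) < δ1 := hprop2 S hS hclose2
  have hcloseD : ∀ h ∈ D, ∀ x : X, dist (T h x) (S h x) < c' / 4 := hprop3 S hS hclose3
  -- construction of the shadowing map f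
  have htr : ∀ x : X, ∃ y : X, ∀ n : ℤ, dist (T (g' ^ n) y) (S (g' ^ n) x) < ε1 := by
    intro x
    apply htrace (fun n => S (g' ^ n) x)
    intro n
    have h1 : S (g' ^ (n + 1)) x = S g' (S (g' ^ n) x) := by
      rw [← hS.2.2]
      congr 1
      group
    show dist (T g' (S (g' ^ n) x)) (S (g' ^ (n + 1)) x) < δ1
    rw [h1]
    exact hcloseg _
  choose f hf using htr
  -- uniqueness of the traced point
  have huniq : ∀ x y : X,
      (∀ n : ℤ, dist (T (g' ^ n) y) (S (g' ^ n) x) ≤ c' - ε1) → y = f x := by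
    intro x y hy
    by_contra hne
    obtain ⟨n, hn⟩ := hexp'.2 y (f x) hne
    have h1 := hf x n
    have h2 := hy n
    have h3 := dist_triangle (T (g' ^ n) y) (S (g' ^ n) x) (T (g' ^ n) (f x))
    rw [dist_comm] at h1
    linarith
  -- the conjugacy subgroup
  set K : Subgroup G :=
    { carrier := {h : G | ∀ x : X, T h (f x) = f (S h x)}
      one_mem' := by
        intro x
        rw [hT.2.1, hS.2.1]
      mul_mem' := by
        intro p q hp hq x
        rw [hT.2.2, hq x, hp (S q x), ← hS.2.2]
      inv_mem' := by
        intro p hp x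
        have h1 : T p (f (S p⁻¹ x)) = f x := by
          rw [hp (S p⁻¹ x), ← hS.2.2, mul_inv_cancel, hS.2.1]
        calc T p⁻¹ (f x) = T p⁻¹ (T p (f (S p⁻¹ x))) := by rw [h1]
          _ = f (S p⁻¹ x) := by rw [← hT.2.2, inv_mul_cancel, hT.2.1] } with hK
  have hmemK : ∀ h : G, h ∈ K ↔ ∀ x : X, T h (f x) = f (S h x) := fun h => Iff.rfl
  have hgK : g' ∈ K := by
    rw [hmemK]
    intro x
    apply huniq
    intro n
    have e1 : T (g' ^ n) (T g' (f x)) = T (g' ^ (n + 1)) (f x) := by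
      rw [← hT.2.2]
      congr 1
      rw [zpow_add_one]
    have e2 : S (g' ^ n) (S g' x) = S (g' ^ (n + 1)) x := by
      rw [← hS.2.2]
      congr 1
      rw [zpow_add_one]
    rw [e1, e2]
    exact le_trans (le_of_lt (hf x (n + 1))) hε1le
  -- the key step: climbing down the commutator chain
  have hstep : ∀ h : G,
      (∀ u v : X, dist u v < ε1 → dist (T h u) (T h v) < c' / 4) →
      (∀ x : X, dist (T h x) (S h x) < c' / 4) →
      g'⁻¹ * h⁻¹ * g' * h ∈ K → h ∈ K := by
    intro h huc hcl hk
    set w := h⁻¹ * g' * h with hw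
    have hkn : ∀ n : ℤ, ∃ k, k ∈ K ∧ w ^ n = g' ^ n * k := by
      intro n
      induction n using Int.induction_on with
      | zero => exact ⟨1, one_mem K, by simp⟩
      | succ i ih =>
        obtain ⟨k, hkK, hwk⟩ := ih
        refine ⟨g'⁻¹ * k * g' * (g'⁻¹ * h⁻¹ * g' * h),
          mul_mem (mul_mem (mul_mem (inv_mem hgK) hkK) hgK) hk, ?_⟩
        have hsplit : w ^ ((i : ℤ) + 1) = w ^ (i : ℤ) * w := by rw [zpow_add_one]
        rw [hsplit, hwk, hw]
        group
      | pred i ih =>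
        obtain ⟨k, hkK, hwk⟩ := ih
        refine ⟨g' * (k * (g'⁻¹ * h⁻¹ * g' * h)⁻¹) * g'⁻¹,
          mul_mem (mul_mem hgK (mul_mem hkK (inv_mem hk))) (inv_mem hgK), ?_⟩
        have hsplit : w ^ (-(i : ℤ) - 1) = w ^ (-(i : ℤ)) * w⁻¹ := by rw [zpow_sub_one]
        rw [hsplit, hwk, hw]
        group
    rw [hmemK]
    intro x
    apply huniq
    intro n
    obtain ⟨k, hkK, hwn⟩ := hkn n
    have hconj : w ^ n = h⁻¹ * g' ^ n * h := by
      rw [hw]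
      simpa using conj_zpow (i := n) (a := h⁻¹) (b := g')
    have e1 : g' ^ n * h = h * w ^ n := by
      rw [hconj]
      group
    have hkx : T k (f x) = f (S k x) := ((hmemK k).mp hkK) x
    have hskx : S k x = S k x := rfl
    have eT : T (g' ^ n) (T h (f x)) = T h (T (g' ^ n) (f (S k x))) := by
      calc T (g' ^ n) (T h (f x))
          = T (g' ^ n * h) (f x) := (hT.2.2 _ _ _).symm
        _ = T (h * w ^ n) (f x) := by rw [e1]
        _ = T h (T (w ^ n) (f x)) := hT.2.2 _ _ _
        _ = T h (T (g' ^ n * k) (f x)) := by rw [hwn]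
        _ = T h (T (g' ^ n) (T k (f x))) := by rw [hT.2.2 (g' ^ n) k]
        _ = T h (T (g' ^ n) (f (S k x))) := by rw [hkx]
    have eS : S (g' ^ n) (S h x) = S h (S (g' ^ n) (S k x)) := by
      calc S (g' ^ n) (S h x)
          = S (g' ^ n * h) x := (hS.2.2 _ _ _).symm
        _ = S (h * w ^ n) x := by rw [e1]
        _ = S h (S (w ^ n) x) := hS.2.2 _ _ _
        _ = S h (S (g' ^ n * k) x) := by rw [hwn]
        _ = S h (S (g' ^ n) (S k x)) := by rw [hS.2.2 (g' ^ n) k]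
    rw [eT, eS]
    have hd : dist (T (g' ^ n) (f (S k x))) (S (g' ^ n) (S k x)) < ε1 := hf (S k x) n
    have h1 : dist (T h (T (g' ^ n) (f (S k x)))) (T h (S (g' ^ n) (S k x))) < c' / 4 :=
      huc _ _ hd
    have h2 : dist (T h (S (g' ^ n) (S k x))) (S h (S (g' ^ n) (S k x))) < c' / 4 := hcl _
    calc dist (T h (T (g' ^ n) (f (S k x)))) (S h (S (g' ^ n) (S k x)))
        ≤ dist (T h (T (g' ^ n) (f (S k x)))) (T h (S (g' ^ n) (S k x)))
          + dist (T h (S (g' ^ n) (S k x))) (S h (S (g' ^ n) (S k x))) := dist_triangle _ _ _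
      _ ≤ c' - ε1 := by linarith
  -- every generator lies in K, via the commutator chain
  have hchainK : ∀ a ∈ A, a ∈ K := by
    intro a ha
    have hmemD : ∀ i : ℕ, i < nN + 1 → commChain g' a i ∈ D := by
      intro i hi
      rw [hD]
      exact List.mem_flatMap.mpr
        ⟨a, Finset.mem_toList.mpr ha, List.mem_map.mpr ⟨i, List.mem_range.mpr hi, rfl⟩⟩
    have htop : commChain g' a (nN + 1) = 1 := commChain_eq_one hNnormal hgm a hnN
    have hdesc : ∀ j : ℕ, j ≤ nN + 1 → commChain g' a (nN + 1 - j) ∈ K := by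
      intro j
      induction j with
      | zero =>
        intro _
        simpa [htop] using one_mem K
      | succ j ih =>
        intro hj
        have hik := ih (by omega)
        have hii : nN + 1 - j = (nN + 1 - (j + 1)) + 1 := by omega
        rw [hii] at hik
        set i := nN + 1 - (j + 1) with hi
        have hiD : commChain g' a i ∈ D := hmemD i (by omega)
        apply hstep (commChain g' a i)
        · intro u v huv
          exact hμD _ hiD u v (huv.trans_le hε1μ)
        · exact hcloseD _ hiD
        · rw [← commChain_succ]
          exact hik
    have hfin := hdesc (nN + 1) (le_refl _)
    have h00 : commChain g' a 0 = a := rfl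
    simpa [h00] using hfin
  have hallK : ∀ h : G, h ∈ K := by
    intro h
    have hle : Subgroup.closure (A : Set G) ≤ K :=
      (Subgroup.closure_le K).mpr (fun a ha => hchainK a ha)
    rw [hAgen] at hle
    exact hle (Subgroup.mem_top h)
  -- continuity of f
  have hcont : Continuous f := by
    rw [continuous_iff_seqContinuous]
    intro u x hux
    apply Filter.tendsto_of_subseq_tendsto
    intro ns hns
    obtain ⟨z, φ, hφ, hz⟩ := CompactSpace.tendsto_subseq (fun j => f (u (ns j)))
    refine ⟨φ, ?_⟩
    have hzfx : z = f x := by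
      apply huniq x z
      intro n
      have h2 : Filter.Tendsto (fun j => u (ns (φ j))) Filter.atTop (nhds x) :=
        hux.comp (hns.comp hφ.tendsto_atTop)
      have h1 : Filter.Tendsto (fun j => T (g' ^ n) (f (u (ns (φ j))))) Filter.atTop
          (nhds (T (g' ^ n) z)) := ((hT.1 (g' ^ n)).tendsto z).comp hz
      have h3 : Filter.Tendsto (fun j => S (g' ^ n) (u (ns (φ j)))) Filter.atTop
          (nhds (S (g' ^ n) x)) := ((hS.1 (g' ^ n)).tendsto x).comp h2
      have h4 := h1.dist h3
      have h5 : ∀ j, dist (T (g' ^ n) (f (u (ns (φ j))))) (S (g' ^ n) (u (ns (φ j)))) ≤ ε1 :=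
        fun j => le_of_lt (hf _ n)
      have h6 : dist (T (g' ^ n) z) (S (g' ^ n) x) ≤ ε1 :=
        le_of_tendsto h4 (Filter.Eventually.of_forall h5)
      exact le_trans h6 hε1le
    rw [← hzfx]
    exact hz
  refine ⟨f, hcont, fun h x => ((hmemK h).mp (hallK h)) x, fun x => ?_⟩
  have h0 := hf x 0
  simp only [zpow_zero, hT.2.1, hS.2.1] at h0
  exact le_trans (le_of_lt h0) hε1ε
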